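/- For a fixed u ∈ S^n, the metrics γ_u(K,L) = max_{v ∈ S_u} |h_u(K,v) − h_u(L,v)| and the spherical Hausdorff distance δ_s induce the same topology on the space K_u^p(S^n) of proper convex bodies contained in the open hemisphere centered at u. -/

import Mathlib

open scoped RealInnerProductSpace Pointwise
open Real

noncomputable section

/-- `Esp n` is the ambient Euclidean space `ℝ^{n+1}` containing the unit sphere `S^n`. -/
abbrev Esp (n : ℕ) : Type := EuclideanSpace ℝ (Fin (n + 1))

/-- The unit sphere `S^n ⊆ ℝ^{n+1}`. -/
def uSphere (n : ℕ) : Set (Esp n) := {x | ‖x‖ = 1}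

/-- `rad A = {λ • x : λ ≥ 0, x ∈ A}`. -/
def radSet {n : ℕ} (A : Set (Esp n)) : Set (Esp n) :=
  {y | ∃ l : ℝ, 0 ≤ l ∧ ∃ x ∈ A, y = l • x}

/-- A set `A ⊆ S^n` is spherically convex if `rad A` is convex. -/
def SphConvex {n : ℕ} (A : Set (Esp n)) : Prop := Convex ℝ (radSet A)

/-- The open hemisphere centered at `u`. -/
def openHemi {n : ℕ} (u : Esp n) : Set (Esp n) := {v | ‖v‖ = 1 ∧ 0 < ⟪u, v⟫}

/-- The equator `S_u = {v ∈ S^n : u ⬝ v = 0}`. -/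
def equator {n : ℕ} (u : Esp n) : Set (Esp n) := {v | ‖v‖ = 1 ∧ ⟪u, v⟫ = 0}

/-- Proper convex bodies contained in the open hemisphere centered at `u`:
the class `K_u^p(S^n)`. -/
def properBodies {n : ℕ} (u : Esp n) : Set (Set (Esp n)) :=
  {K | K.Nonempty ∧ IsClosed K ∧ K ⊆ openHemi u ∧ SphConvex K}

/-- All proper convex bodies `K^p(S^n)`. -/
def allProperBodies (n : ℕ) : Set (Set (Esp n)) :=
  {K | ∃ u : Esp n, ‖u‖ = 1 ∧ K ∈ properBodies u}

/-- The gnomonic projection `g_u(v) = v/(u⬝v) − u`. -/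
def gno {n : ℕ} (u v : Esp n) : Esp n := (⟪u, v⟫)⁻¹ • v - u

/-- The inverse gnomonic projection `x ↦ (x+u)/‖x+u‖`. -/
def gnoInv {n : ℕ} (u x : Esp n) : Esp n := ‖x + u‖⁻¹ • (x + u)

/-- The hyperplane `ℝ^n_u = u^⊥` of `ℝ^{n+1}`. -/
def hyper {n : ℕ} (u : Esp n) : Set (Esp n) := {x | ⟪u, x⟫ = 0}

/-- The class `K(ℝ^n_u)` of (nonempty) compact convex subsets of the hyperplane `u^⊥`. -/
def cptCvx {n : ℕ} (u : Esp n) : Set (Set (Esp n)) :=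
  {C | C.Nonempty ∧ IsCompact C ∧ Convex ℝ C ∧ C ⊆ hyper u}

/-- The spherical support function `h_u(K,v) = max {sgn(v⬝w) d(u, w|S_{u,v}) : w ∈ K}`,
where `d(u, w|S_{u,v}) = arccos ((u⬝w)/√((u⬝w)² + (v⬝w)²))`. -/
def sphSupp {n : ℕ} (u : Esp n) (K : Set (Esp n)) (v : Esp n) : ℝ :=
  sSup ((fun w => Real.sign ⟪v, w⟫ *
    Real.arccos (⟪u, w⟫ / Real.sqrt (⟪u, w⟫ ^ 2 + ⟪v, w⟫ ^ 2))) '' K)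

/-- The Euclidean support function `h(C,x) = sup {x ⬝ y : y ∈ C}`. -/
def esupp {n : ℕ} (C : Set (Esp n)) (x : Esp n) : ℝ :=
  sSup ((fun y => ⟪x, y⟫) '' C)

/-- Spherical (geodesic) distance on `S^n`. -/
def sphDist {n : ℕ} (x y : Esp n) : ℝ := Real.arccos ⟪x, y⟫

/-- The Hausdorff distance `δ_s` induced by the spherical distance. -/
def sphHaus {n : ℕ} (A B : Set (Esp n)) : ℝ :=
  sInf {r | 0 ≤ r ∧ (∀ a ∈ A, ∃ b ∈ B, sphDist a b ≤ r) ∧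
    (∀ b ∈ B, ∃ a ∈ A, sphDist a b ≤ r)}

/-- The metric `γ_u(K,L) = max_{v ∈ S_u} |h_u(K,v) − h_u(L,v)|`. -/
def gammaU {n : ℕ} (u : Esp n) (K L : Set (Esp n)) : ℝ :=
  sSup ((fun v => |sphSupp u K v - sphSupp u L v|) '' equator u)

/-- Spherical projection of `K` onto the great subsphere `V ∩ S^n`:
`K|S = (rad K | V) ∩ S^n`. -/
def sphProj {n : ℕ} (V : Submodule ℝ (Esp n)) (K : Set (Esp n)) : Set (Esp n) :=
  ((fun x => (V.orthogonalProjection x : Esp n)) '' radSet K) ∩ uSphere n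

/-- Orthogonal projection of a subset of `ℝ^{n+1}` onto a linear subspace `W`. -/
def eProj {n : ℕ} (W : Submodule ℝ (Esp n)) (C : Set (Esp n)) : Set (Esp n) :=
  (fun x => (W.orthogonalProjection x : Esp n)) '' C

/-- The spherical convex hull: the intersection of all spherically convex subsets of `S^n`
containing `A`. -/
def sphHull {n : ℕ} (A : Set (Esp n)) : Set (Esp n) :=
  ⋂₀ {B | A ⊆ B ∧ B ⊆ uSphere n ∧ SphConvex B}

/-- The set `C` of pairs of proper convex bodies contained in a common open hemisphere. -/
def pairsC (n : ℕ) : Set (Set (Esp n) × Set (Esp n)) :=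
  {p | ∃ u : Esp n, ‖u‖ = 1 ∧ p.1 ∈ properBodies u ∧ p.2 ∈ properBodies u}

/-- `u`-projection covariance of a binary operation on `K_u^p(S^n)`:
`(K|S) * (L|S) = (K*L)|S` for all great subspheres `S = V ∩ S^n` through `u`
with `0 ≤ k = dim S ≤ n − 1`. -/
def uProjCovariant {n : ℕ} (u : Esp n)
    (op : Set (Esp n) → Set (Esp n) → Set (Esp n)) : Prop :=
  ∀ V : Submodule ℝ (Esp n), u ∈ V → Module.finrank ℝ V ≤ n →
    ∀ K ∈ properBodies u, ∀ L ∈ properBodies u,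
      op (sphProj V K) (sphProj V L) = sphProj V (op K L)

/-- Projection covariance: `u`-projection covariance for every `u ∈ S^n`. -/
def projCovariantC {n : ℕ} (op : Set (Esp n) → Set (Esp n) → Set (Esp n)) : Prop :=
  ∀ u : Esp n, ‖u‖ = 1 → uProjCovariant u op

/-- Projection covariance for operations on compact convex subsets of `u^⊥`. -/
def eProjCovariant {n : ℕ} (u : Esp n)
    (op : Set (Esp n) → Set (Esp n) → Set (Esp n)) : Prop :=
  ∀ W : Submodule ℝ (Esp n), (W : Set (Esp n)) ⊆ hyper u →
    ∀ K ∈ cptCvx u, ∀ L ∈ cptCvx u,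
      op (eProj W K) (eProj W L) = eProj W (op K L)

section Aux

open Real Set

/-! ### Scalar lemmas -/

lemma aux_one_sub_cos (x : ℝ) : 1 - Real.cos x ≤ x^2/2 := by
  nlinarith [Real.one_sub_sq_div_two_le_cos (x := x)]

lemma aux_jordan {θ : ℝ} (h0 : 0 ≤ θ) (h1 : θ ≤ π) : θ ≤ π * Real.sin (θ/2) := by
  have h := Real.mul_le_sin (x := θ/2) (by linarith) (by linarith)
  have hπ := Real.pi_pos
  have h2 : 2 / π * (θ/2) = θ / π := by ring
  rw [h2, div_le_iff₀ hπ] at h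
  linarith [h]

lemma aux_arctan_sub {x y B : ℝ} (hxy : y < x) (hx : |x| ≤ B) (hy : |y| ≤ B) :
    (x - y)/(1+B^2) ≤ Real.arctan x - Real.arctan y := by
  obtain ⟨c, hc, hc2⟩ := exists_hasDerivAt_eq_slope Real.arctan (fun t => 1/(1+t^2)) hxy
    (Real.continuous_arctan.continuousOn) (fun t _ => Real.hasDerivAt_arctan t)
  have hcB : c^2 ≤ B^2 := by
    rcases hc with ⟨h1, h2⟩
    rw [abs_le] at hx hy
    nlinarith
  have hpos : (0:ℝ) < 1 + c^2 := by positivity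
  have hposB : (0:ℝ) < 1 + B^2 := by positivity
  have h3 : (x - y)/(1+B^2) ≤ (x - y)/(1+c^2) := by
    apply div_le_div_of_nonneg_left (by linarith) hpos (by linarith)
  have h4 : (x - y)/(1+c^2) = Real.arctan x - Real.arctan y := by
    field_simp at hc2 ⊢
    rw [eq_div_iff (by linarith : x - y ≠ 0)] at hc2
    linarith [hc2]
  linarith

lemma aux_arctan_sub_le {x y : ℝ} (hxy : y ≤ x) : Real.arctan x - Real.arctan y ≤ x - y := by
  rcases eq_or_lt_of_le hxy with h | h
  · simp [h]
  · obtain ⟨c, _, hc2⟩ := exists_hasDerivAt_eq_slope Real.arctan (fun t => 1/(1+t^2)) h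
      (Real.continuous_arctan.continuousOn) (fun t _ => Real.hasDerivAt_arctan t)
    have hpos : (0:ℝ) < 1 + c^2 := by positivity
    have hc3 : (Real.arctan x - Real.arctan y) * (1 + c^2) = x - y := by
      field_simp at hc2
      linarith [hc2]
    have h6 : 0 ≤ Real.arctan x - Real.arctan y := by
      have := Real.arctan_strictMono.monotone hxy
      linarith
    nlinarith [sq_nonneg c]

lemma aux_arctan_lip (x y : ℝ) : |Real.arctan x - Real.arctan y| ≤ |x - y| := by
  rcases le_total y x with h | h
  · rw [abs_of_nonneg (by linarith [Real.arctan_strictMono.monotone h] : (0:ℝ) ≤ Real.arctan x - Real.arctan y),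
      abs_of_nonneg (by linarith : (0:ℝ) ≤ x - y)]
    exact aux_arctan_sub_le h
  · rw [abs_sub_comm, abs_sub_comm x y,
      abs_of_nonneg (by linarith [Real.arctan_strictMono.monotone h] : (0:ℝ) ≤ Real.arctan y - Real.arctan x),
      abs_of_nonneg (by linarith : (0:ℝ) ≤ y - x)]
    exact aux_arctan_sub_le h

lemma aux_arctan_nonneg {x : ℝ} (hx : 0 ≤ x) : 0 ≤ Real.arctan x := by
  rw [← Real.arctan_zero]
  exact Real.arctan_strictMono.monotone hx

lemma aux_sign_arccos {c s : ℝ} (hc : 0 < c) :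
    Real.sign s * Real.arccos (c / Real.sqrt (c^2 + s^2)) = Real.arctan (s / c) := by
  have key : ∀ t : ℝ, 0 ≤ t → Real.arccos (c / Real.sqrt (c^2 + t^2)) = Real.arctan (t / c) := by
    intro t ht
    rw [Real.arctan_eq_arccos (by positivity)]
    congr 1
    have h1 : 1 + (t/c)^2 = (c^2 + t^2)/c^2 := by field_simp
    rw [h1, Real.sqrt_div (by positivity : (0:ℝ) ≤ c^2+t^2), Real.sqrt_sq hc.le,
      inv_div]
  rcases lt_trichotomy s 0 with h | h | h
  · rw [Real.sign_of_neg h]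
    have h2 := key (-s) (by linarith)
    have h3 : (-s)^2 = s^2 := by ring
    rw [h3] at h2
    have h4 : s / c = -(-s/c) := by ring
    rw [h4, Real.arctan_neg, ← h2]; ring
  · simp [h, Real.sign_zero]
  · rw [Real.sign_of_pos h, key s h.le, one_mul]

lemma aux_quot_lip {sa sb ca cb κ r : ℝ} (hκ : 0 < κ) (hκ1 : κ ≤ 1) (hca : κ ≤ ca) (hcb : κ ≤ cb)
    (hsb : |sb| ≤ 1) (hs : |sa - sb| ≤ r) (hc : |ca - cb| ≤ r) :
    |sa/ca - sb/cb| ≤ 2/κ^2 * r := by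
  have hca0 : 0 < ca := lt_of_lt_of_le hκ hca
  have hcb0 : 0 < cb := lt_of_lt_of_le hκ hcb
  have hr0 : 0 ≤ r := le_trans (abs_nonneg _) hs
  have e : sa/ca - sb/cb = (sa - sb)/ca + sb*(cb - ca)/(ca*cb) := by field_simp; ring
  rw [e]
  have h1 : |(sa-sb)/ca| ≤ r/κ := by
    rw [abs_div, abs_of_pos hca0]
    exact div_le_div₀ hr0 hs hκ hca
  have h2 : |sb*(cb-ca)/(ca*cb)| ≤ r/κ^2 := by
    rw [abs_div, abs_mul, abs_of_pos (mul_pos hca0 hcb0)]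
    have hnum : |sb| * |cb - ca| ≤ 1 * r := by
      apply mul_le_mul hsb _ (abs_nonneg _) zero_le_one
      rwa [abs_sub_comm]
    have hden : κ^2 ≤ ca * cb := by nlinarith
    calc |sb| * |cb-ca| / (ca*cb) ≤ (1*r) / κ^2 := div_le_div₀ (by linarith) hnum (by positivity) hden
      _ = r/κ^2 := by ring
  have h3 : r/κ ≤ r/κ^2 := by
    apply div_le_div_of_nonneg_left hr0 (by positivity)
    nlinarith
  calc |(sa-sb)/ca + sb*(cb-ca)/(ca*cb)| ≤ |(sa-sb)/ca| + |sb*(cb-ca)/(ca*cb)| := abs_add_le _ _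
    _ ≤ r/κ + r/κ^2 := add_le_add h1 h2
    _ ≤ r/κ^2 + r/κ^2 := by linarith
    _ = 2/κ^2 * r := by ring

end Aux
section Geo

open Real Set

variable {n : ℕ} {u : Esp n}

/-! ### Spherical distance -/

lemma aux_sphDist_nonneg (a b : Esp n) : 0 ≤ sphDist a b := Real.arccos_nonneg _

lemma aux_sphDist_le_pi (a b : Esp n) : sphDist a b ≤ π := Real.arccos_le_pi _

lemma aux_sphDist_comm (a b : Esp n) : sphDist a b = sphDist b a := by
  rw [sphDist, sphDist, real_inner_comm]

lemma aux_chord_le_sphDist {a b : Esp n} (ha : ‖a‖ = 1) (hb : ‖b‖ = 1) :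
    ‖a - b‖ ≤ sphDist a b := by
  set t := ⟪a, b⟫ with ht
  have habs : |t| ≤ 1 := by
    have := abs_real_inner_le_norm a b
    rwa [ha, hb, mul_one] at this
  rw [abs_le] at habs
  have hcos : Real.cos (sphDist a b) = t := Real.cos_arccos habs.1 habs.2
  have hθ0 : 0 ≤ sphDist a b := aux_sphDist_nonneg a b
  have hsq : ‖a - b‖^2 = 2 - 2*t := by
    rw [norm_sub_sq_real, ha, hb, ← ht]; ring
  have hub := aux_one_sub_cos (sphDist a b)
  rw [hcos] at hub
  nlinarith [norm_nonneg (a - b)]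

lemma aux_sphDist_le_chord {a b : Esp n} (ha : ‖a‖ = 1) (hb : ‖b‖ = 1) :
    sphDist a b ≤ π/2 * ‖a - b‖ := by
  set t := ⟪a, b⟫ with ht
  have habs : |t| ≤ 1 := by
    have := abs_real_inner_le_norm a b
    rwa [ha, hb, mul_one] at this
  rw [abs_le] at habs
  set θ := sphDist a b with hθ
  have hcos : Real.cos θ = t := Real.cos_arccos habs.1 habs.2
  have hθ0 : 0 ≤ θ := aux_sphDist_nonneg a b
  have hθπ : θ ≤ π := aux_sphDist_le_pi a b
  have hsq : ‖a - b‖^2 = 2 - 2*t := by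
    rw [norm_sub_sq_real, ha, hb, ← ht]; ring
  have hsin : Real.sin (θ/2)^2 = (1 - t)/2 := by
    rw [Real.sin_sq_eq_half_sub]
    rw [show 2*(θ/2) = θ by ring, hcos]
    ring
  have hsin0 : 0 ≤ Real.sin (θ/2) := Real.sin_nonneg_of_nonneg_of_le_pi (by linarith) (by linarith)
  have hchord : ‖a - b‖ = 2 * Real.sin (θ/2) := by
    nlinarith [norm_nonneg (a - b)]
  have := aux_jordan hθ0 hθπ
  rw [hchord]
  linarith

/-! ### Gnomonic projection basics -/

lemma aux_inner_u_gno (hu : ‖u‖ = 1) {w : Esp n} (hw : ⟪u, w⟫ ≠ 0) : ⟪u, gno u w⟫ = 0 := by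
  rw [gno, inner_sub_right, real_inner_smul_right, real_inner_self_eq_norm_sq, hu,
    inv_mul_cancel₀ hw]
  norm_num

lemma aux_inner_eq_gno {v w : Esp n} (hv : ⟪u, v⟫ = 0) (hw : ⟪u, w⟫ ≠ 0) :
    ⟪v, gno u w⟫ = ⟪v, w⟫ / ⟪u, w⟫ := by
  have hvu : ⟪v, u⟫ = 0 := by rw [real_inner_comm]; exact hv
  rw [gno, inner_sub_right, real_inner_smul_right, hvu, sub_zero, div_eq_inv_mul]

lemma aux_gnoInv_gno (hu : ‖u‖ = 1) {w : Esp n} (hw : w ∈ openHemi u) :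
    gnoInv u (gno u w) = w := by
  obtain ⟨hn1, hc⟩ := hw
  have h1 : gno u w + u = (⟪u, w⟫)⁻¹ • w := by rw [gno, sub_add_cancel]
  rw [gnoInv, h1, norm_smul, hn1, mul_one, norm_inv, Real.norm_eq_abs, abs_of_pos hc,
    inv_inv, smul_smul, mul_inv_cancel₀ (ne_of_gt hc), one_smul]

lemma aux_gno_add_u {w : Esp n} : gno u w + u = (⟪u, w⟫)⁻¹ • w := by
  rw [gno, sub_add_cancel]

/-! ### Support function rewriting -/

lemma aux_sphSupp_eq (hu : ‖u‖ = 1) {K : Set (Esp n)} (hK : K ⊆ openHemi u)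
    {v : Esp n} (hv : ⟪u, v⟫ = 0) :
    sphSupp u K v = sSup ((fun w => Real.arctan ⟪v, gno u w⟫) '' K) := by
  unfold sphSupp
  congr 1
  apply Set.image_congr
  intro w hw
  have hc := (hK hw).2
  rw [aux_inner_eq_gno hv (ne_of_gt hc)]
  exact aux_sign_arccos hc

lemma aux_bddA (v : Esp n) (K : Set (Esp n)) :
    BddAbove ((fun w => Real.arctan ⟪v, gno u w⟫) '' K) := by
  refine ⟨π/2, ?_⟩
  rintro x ⟨w, hw, rfl⟩
  exact (Real.arctan_lt_pi_div_two _).le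

lemma aux_abs_sphSupp_le (hu : ‖u‖ = 1) {K : Set (Esp n)} (hKne : K.Nonempty)
    (hKo : K ⊆ openHemi u) {v : Esp n} (hv : ⟪u, v⟫ = 0) :
    |sphSupp u K v| ≤ π/2 := by
  obtain ⟨w₀, hw₀⟩ := hKne
  rw [aux_sphSupp_eq hu hKo hv, abs_le]
  constructor
  · calc -(π/2) ≤ Real.arctan ⟪v, gno u w₀⟫ := (Real.neg_pi_div_two_lt_arctan _).le
      _ ≤ _ := le_csSup (aux_bddA _ _) ⟨w₀, hw₀, rfl⟩
  · apply csSup_le (Set.Nonempty.image _ ⟨w₀, hw₀⟩)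
    rintro x ⟨w, hw, rfl⟩
    exact (Real.arctan_lt_pi_div_two _).le

/-! ### Compactness, continuity, convexity -/

lemma aux_isCompact (hK : IsClosed K) (hKo : K ⊆ openHemi u) : IsCompact K := by
  have hb : Bornology.IsBounded K := by
    apply (Metric.isBounded_closedBall (x := (0 : Esp n)) (r := 1)).subset
    intro w hw
    simp only [Metric.mem_closedBall, dist_zero_right]
    exact le_of_eq (hKo hw).1
  exact Metric.isCompact_of_isClosed_isBounded hK hb

lemma aux_gno_continuousOn (hKo : K ⊆ openHemi u) : ContinuousOn (gno u) K := by
  apply ContinuousOn.sub _ continuousOn_const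
  exact ContinuousOn.smul
    (ContinuousOn.inv₀ ((continuous_const.inner continuous_id).continuousOn)
      (fun w hw => ne_of_gt (hKo hw).2))
    continuousOn_id

lemma aux_gno_image_convex (hu : ‖u‖ = 1) {K : Set (Esp n)} (hK : K ∈ properBodies u) :
    Convex ℝ (gno u '' K) := by
  obtain ⟨hKne, hKcl, hKo, hKcv⟩ := hK
  rintro x ⟨a, ha, rfl⟩ y ⟨b, hb, rfl⟩ s t hs ht hst
  have hca : 0 < ⟪u, a⟫ := (hKo ha).2
  have hcb : 0 < ⟪u, b⟫ := (hKo hb).2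
  set α := s / ⟪u, a⟫ with hα
  set β := t / ⟪u, b⟫ with hβ
  have hα0 : 0 ≤ α := div_nonneg hs hca.le
  have hβ0 : 0 ≤ β := div_nonneg ht hcb.le
  set σ := α + β with hσ
  have hσ0 : 0 < σ := by
    have hst' : 0 < s ∨ 0 < t := by
      by_contra h
      push_neg at h
      obtain ⟨h1, h2⟩ := h
      linarith
    rcases hst' with h | h
    · have : 0 < α := div_pos h hca
      linarith
    · have : 0 < β := div_pos h hcb
      linarith
  have haR : a ∈ radSet K := ⟨1, zero_le_one, a, ha, (one_smul _ _).symm⟩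
  have hbR : b ∈ radSet K := ⟨1, zero_le_one, b, hb, (one_smul _ _).symm⟩
  have hmem : (α/σ) • a + (β/σ) • b ∈ radSet K := by
    apply hKcv haR hbR (div_nonneg hα0 hσ0.le) (div_nonneg hβ0 hσ0.le)
    field_simp
    exact hσ.symm
  obtain ⟨l, hl0, xx, hxx, hxeq⟩ := hmem
  have hzR : α • a + β • b = (σ * l) • xx := by
    have : α • a + β • b = σ • ((α/σ) • a + (β/σ) • b) := by
      rw [smul_add, smul_smul, smul_smul]
      congr 2 <;> field_simp
    rw [this, hxeq, smul_smul]
  -- inner product with u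
  have hinner : ⟪u, α • a + β • b⟫ = 1 := by
    rw [inner_add_right, real_inner_smul_right, real_inner_smul_right, hα, hβ,
      div_mul_cancel₀ _ (ne_of_gt hca), div_mul_cancel₀ _ (ne_of_gt hcb), hst]
  have hcx : 0 < ⟪u, xx⟫ := (hKo hxx).2
  have hσl : (σ * l) * ⟪u, xx⟫ = 1 := by
    rw [← real_inner_smul_right, ← hzR, hinner]
  have hlinv : σ * l = (⟪u, xx⟫)⁻¹ := eq_inv_of_mul_eq_one_left hσl
  refine ⟨xx, hxx, ?_⟩
  have hu1 : s • u + t • u = u := by rw [← add_smul, hst, one_smul]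
  have hαa : α • a = s • ((⟪u, a⟫)⁻¹ • a) := by rw [smul_smul, hα, div_eq_mul_inv]
  have hβb : β • b = t • ((⟪u, b⟫)⁻¹ • b) := by rw [smul_smul, hβ, div_eq_mul_inv]
  have hgoal : s • gno u a + t • gno u b = (α • a + β • b) - u := by
    have h2 : s • gno u a + t • gno u b = (α • a + β • b) - (s + t) • u := by
      rw [gno, gno, smul_sub, smul_sub, ← hαa, ← hβb, add_smul]
      abel
    rw [h2, hst, one_smul]
  rw [gno, ← hlinv, ← hzR]
  exact hgoal.symm

end Geo
section Geo2

open Real Set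

variable {n : ℕ} {u : Esp n}

lemma aux_normalize_lip {x y : Esp n} (hx : 1 ≤ ‖x‖) (hy : 1 ≤ ‖y‖) :
    ‖‖x‖⁻¹ • x - ‖y‖⁻¹ • y‖ ≤ 2 * ‖x - y‖ := by
  have hx0 : (0:ℝ) < ‖x‖ := lt_of_lt_of_le one_pos hx
  have hy0 : (0:ℝ) < ‖y‖ := lt_of_lt_of_le one_pos hy
  have key : ‖x‖⁻¹ • x - ‖y‖⁻¹ • y = ‖x‖⁻¹ • (x - y) + (‖x‖⁻¹ - ‖y‖⁻¹) • y := by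
    rw [smul_sub, sub_smul]
    abel
  rw [key]
  have h1 : ‖‖x‖⁻¹ • (x - y)‖ ≤ ‖x - y‖ := by
    rw [norm_smul, norm_inv, norm_norm]
    have hinv : ‖x‖⁻¹ ≤ 1 := by
      rw [inv_le_one_iff₀]
      right; exact hx
    nlinarith [norm_nonneg (x - y)]
  have h2 : ‖(‖x‖⁻¹ - ‖y‖⁻¹) • y‖ ≤ ‖x - y‖ := by
    rw [norm_smul, Real.norm_eq_abs]
    have e : (‖x‖⁻¹ - ‖y‖⁻¹) * ‖y‖ = (‖y‖ - ‖x‖) / ‖x‖ := by field_simp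
    have e2 : |‖x‖⁻¹ - ‖y‖⁻¹| * ‖y‖ = |(‖y‖ - ‖x‖) / ‖x‖| := by
      rw [← e, abs_mul, abs_of_pos hy0]
    rw [e2, abs_div, abs_of_pos hx0]
    have h3 : |‖y‖ - ‖x‖| ≤ ‖x - y‖ := by
      rw [abs_sub_comm]
      exact abs_norm_sub_norm_le x y
    calc |‖y‖ - ‖x‖| / ‖x‖ ≤ ‖x - y‖ / ‖x‖ := by gcongr
      _ ≤ ‖x - y‖ := div_le_self (norm_nonneg _) hx
  calc ‖_ + _‖ ≤ ‖‖x‖⁻¹ • (x - y)‖ + ‖(‖x‖⁻¹ - ‖y‖⁻¹) • y‖ := norm_add_le _ _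
    _ ≤ 2 * ‖x - y‖ := by linarith

lemma aux_equator_nonempty (hn : 2 ≤ n) (hu : ‖u‖ = 1) : (equator u).Nonempty := by
  have hu0 : u ≠ 0 := by
    intro h
    rw [h, norm_zero] at hu
    norm_num at hu
  have hne : (ℝ ∙ u)ᗮ ≠ ⊥ := by
    intro h
    rw [Submodule.orthogonal_eq_bot_iff] at h
    have h3 : Module.finrank ℝ (Esp n) = 1 := by
      rw [← finrank_top ℝ (Esp n), ← h, finrank_span_singleton hu0]
    rw [finrank_euclideanSpace_fin] at h3
    omega
  obtain ⟨x, hx, hx0⟩ := Submodule.exists_mem_ne_zero_of_ne_bot hne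
  refine ⟨‖x‖⁻¹ • x, norm_smul_inv_norm (𝕜 := ℝ) hx0, ?_⟩
  have hux : ⟪u, x⟫ = 0 :=
    (Submodule.mem_orthogonal _ _).mp hx u (Submodule.mem_span_singleton_self u)
  rw [real_inner_smul_right, hux, mul_zero]

-- distance between inverse gnomonic images
lemma aux_sphDist_gnoInv (hu : ‖u‖ = 1) {a b p x : Esp n}
    (ha : a ∈ openHemi u) (hb : b ∈ openHemi u)
    (hpa : gno u a = p) (hxb : gno u b = x)
    (hp : ⟪u, p⟫ = 0) (hx : ⟪u, x⟫ = 0) :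
    sphDist a b ≤ π * ‖p - x‖ := by
  have hnp : 1 ≤ ‖p + u‖ := by
    have h1 : ‖p + u‖^2 = ‖p‖^2 + 1 := by
      rw [norm_add_sq_real, hu]
      have : ⟪p, u⟫ = 0 := by rw [real_inner_comm]; exact hp
      rw [this]; ring
    nlinarith [norm_nonneg (p + u), norm_nonneg p]
  have hnx : 1 ≤ ‖x + u‖ := by
    have h1 : ‖x + u‖^2 = ‖x‖^2 + 1 := by
      rw [norm_add_sq_real, hu]
      have : ⟪x, u⟫ = 0 := by rw [real_inner_comm]; exact hx
      rw [this]; ring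
    nlinarith [norm_nonneg (x + u), norm_nonneg x]
  have hag : a = ‖p + u‖⁻¹ • (p + u) := by
    have := aux_gnoInv_gno hu ha
    rw [hpa] at this
    rw [← this, gnoInv]
  have hbg : b = ‖x + u‖⁻¹ • (x + u) := by
    have := aux_gnoInv_gno hu hb
    rw [hxb] at this
    rw [← this, gnoInv]
  have hchord : ‖a - b‖ ≤ 2 * ‖p - x‖ := by
    rw [hag, hbg]
    have := aux_normalize_lip hnp hnx
    have he : (p + u) - (x + u) = p - x := by abel
    rwa [he] at this
  calc sphDist a b ≤ π/2 * ‖a - b‖ := aux_sphDist_le_chord ha.1 hb.1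
    _ ≤ π/2 * (2 * ‖p - x‖) := by
        have := Real.pi_pos
        gcongr
    _ = π * ‖p - x‖ := by ring

end Geo2
section Geo3

open Real Set

variable {n : ℕ} {u : Esp n}

/-- Direction 1 workhorse: one-sided comparison of support functions for
Hausdorff-close bodies. -/
lemma aux_supp_le_of_close (hu : ‖u‖ = 1) {K L : Set (Esp n)}
    (hKne : K.Nonempty) (hKo : K ⊆ openHemi u) (hLo : L ⊆ openHemi u)
    {κ r' : ℝ} (hκ : 0 < κ) (hκ1 : κ ≤ 1)
    (hKcap : ∀ a ∈ K, κ ≤ ⟪u, a⟫) (hLcap : ∀ b ∈ L, κ ≤ ⟪u, b⟫)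
    (hKL : ∀ a ∈ K, ∃ b ∈ L, sphDist a b ≤ r') {v : Esp n} (hv : v ∈ equator u) :
    sphSupp u K v ≤ sphSupp u L v + (2/κ^2) * r' := by
  rw [aux_sphSupp_eq hu hKo hv.2, aux_sphSupp_eq hu hLo hv.2]
  apply csSup_le (hKne.image _)
  rintro _ ⟨a, ha, rfl⟩
  show Real.arctan ⟪v, gno u a⟫ ≤ _
  obtain ⟨b, hb, hab⟩ := hKL a ha
  have hchord : ‖a - b‖ ≤ r' := (aux_chord_le_sphDist (hKo ha).1 (hLo hb).1).trans hab
  have hca : 0 < ⟪u, a⟫ := (hKo ha).2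
  have hcb : 0 < ⟪u, b⟫ := (hLo hb).2
  have hsa : |⟪v, a⟫ - ⟪v, b⟫| ≤ r' := by
    rw [← inner_sub_right]
    refine le_trans ?_ hchord
    have := abs_real_inner_le_norm v (a - b)
    rwa [hv.1, one_mul] at this
  have hcc : |⟪u, a⟫ - ⟪u, b⟫| ≤ r' := by
    rw [← inner_sub_right]
    refine le_trans ?_ hchord
    have := abs_real_inner_le_norm u (a - b)
    rwa [hu, one_mul] at this
  have hsb1 : |⟪v, b⟫| ≤ 1 := by
    have := abs_real_inner_le_norm v b
    rwa [hv.1, (hLo hb).1, one_mul] at this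
  have hq := aux_quot_lip hκ hκ1 (hKcap a ha) (hLcap b hb) hsb1 hsa hcc
  have harc2 : |Real.arctan ⟪v, gno u a⟫ - Real.arctan ⟪v, gno u b⟫| ≤ 2/κ^2 * r' := by
    rw [aux_inner_eq_gno hv.2 (ne_of_gt hca), aux_inner_eq_gno hv.2 (ne_of_gt hcb)]
    exact le_trans (aux_arctan_lip _ _) hq
  have hle : Real.arctan ⟪v, gno u b⟫ ≤ sSup ((fun w => Real.arctan ⟪v, gno u w⟫) '' L) :=
    le_csSup (aux_bddA v L) ⟨b, hb, rfl⟩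
  have h5 := (abs_le.mp harc2).2
  linarith

/-- Direction 2 workhorse: if all support function differences are at most `r`,
every point of `L` is close to `K`. -/
lemma aux_close_point (hu : ‖u‖ = 1) {K L : Set (Esp n)}
    (hK : K ∈ properBodies u) (hL : L ∈ properBodies u) {R' r : ℝ} (hr0 : 0 ≤ r)
    (hKb : ∀ w ∈ K, ‖gno u w‖ ≤ R') (hLb : ∀ w ∈ L, ‖gno u w‖ ≤ R')
    (hγ : ∀ v ∈ equator u, sphSupp u L v - sphSupp u K v ≤ r) :
    ∀ b ∈ L, ∃ a ∈ K, sphDist a b ≤ π * ((1+R'^2) * r) := by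
  obtain ⟨hKne, hKcl, hKo, hKcv⟩ := hK
  obtain ⟨hLne, hLcl, hLo, hLcv⟩ := hL
  intro b hb
  set x := gno u b with hxdef
  have hR'0 : 0 ≤ R' := le_trans (norm_nonneg _) (hLb b hb)
  have hKt : IsCompact (gno u '' K) :=
    (aux_isCompact hKcl hKo).image_of_continuousOn (aux_gno_continuousOn hKo)
  have hKtne : (gno u '' K).Nonempty := hKne.image _
  have hconv : Convex ℝ (gno u '' K) := aux_gno_image_convex hu ⟨hKne, hKcl, hKo, hKcv⟩
  obtain ⟨p, hpK, hpd⟩ := hKt.exists_infDist_eq_dist hKtne x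
  have hux : ⟪u, x⟫ = 0 := aux_inner_u_gno hu (ne_of_gt (hLo hb).2)
  have hup : ⟪u, p⟫ = 0 := by
    obtain ⟨a0, ha0, ha0p⟩ := hpK
    rw [← ha0p]
    exact aux_inner_u_gno hu (ne_of_gt (hKo ha0).2)
  have hobt : ∀ y ∈ gno u '' K, ⟪x - p, y - p⟫ ≤ 0 := by
    apply (norm_eq_iInf_iff_real_inner_le_zero hconv hpK).mp
    rw [dist_eq_norm] at hpd
    rw [← hpd, Metric.infDist_eq_iInf]
    exact iInf_congr fun w => dist_eq_norm x w
  -- the crucial distance bound in the gnomonic image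
  have hd : ‖x - p‖ ≤ (1+R'^2) * r := by
    rcases eq_or_ne x p with he | hne
    · rw [he, sub_self, norm_zero]
      positivity
    · set d := ‖x - p‖ with hdd
      have hd0 : 0 < d := norm_sub_pos_iff.mpr hne
      set v := d⁻¹ • (x - p) with hvdef
      have hvnorm : ‖v‖ = 1 := norm_smul_inv_norm (𝕜 := ℝ) (sub_ne_zero.mpr hne)
      have hveq : v ∈ equator u := by
        refine ⟨hvnorm, ?_⟩
        rw [hvdef, real_inner_smul_right, inner_sub_right, hux, hup]
        ring
      have hsuppK : sphSupp u K v ≤ Real.arctan ⟪v, p⟫ := by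
        rw [aux_sphSupp_eq hu hKo hveq.2]
        apply csSup_le (hKne.image _)
        rintro _ ⟨a, ha, rfl⟩
        show Real.arctan ⟪v, gno u a⟫ ≤ _
        apply Real.arctan_strictMono.monotone
        have hineq := hobt (gno u a) ⟨a, ha, rfl⟩
        have hexp : ⟪v, gno u a⟫ - ⟪v, p⟫ = d⁻¹ * ⟪x - p, gno u a - p⟫ := by
          rw [hvdef, real_inner_smul_left, real_inner_smul_left, ← mul_sub, ← inner_sub_right]
        have hprod : d⁻¹ * ⟪x - p, gno u a - p⟫ ≤ 0 :=
          mul_nonpos_of_nonneg_of_nonpos (inv_pos.mpr hd0).le hineq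
        linarith
      have hsuppL : Real.arctan ⟪v, x⟫ ≤ sphSupp u L v := by
        rw [aux_sphSupp_eq hu hLo hveq.2]
        exact le_csSup (aux_bddA v L) ⟨b, hb, rfl⟩
      have hdiff : ⟪v, x⟫ - ⟪v, p⟫ = d := by
        rw [hvdef, real_inner_smul_left, real_inner_smul_left, ← mul_sub, ← inner_sub_right,
          real_inner_self_eq_norm_sq, ← hdd]
        field_simp
      have hxR : |⟪v, x⟫| ≤ R' := by
        have h1 := abs_real_inner_le_norm v x
        rw [hvnorm, one_mul] at h1
        exact h1.trans (hLb b hb)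
      have hpR : |⟪v, p⟫| ≤ R' := by
        obtain ⟨a0, ha0, ha0p⟩ := hpK
        have h1 := abs_real_inner_le_norm v p
        rw [hvnorm, one_mul] at h1
        refine h1.trans ?_
        rw [← ha0p]
        exact hKb a0 ha0
      have hlt : ⟪v, p⟫ < ⟪v, x⟫ := by linarith
      have hmvt := aux_arctan_sub hlt hxR hpR
      rw [hdiff] at hmvt
      have hgam := hγ v hveq
      have : d / (1+R'^2) ≤ r := by linarith
      rw [div_le_iff₀ (by positivity : (0:ℝ) < 1+R'^2)] at this
      linarith [this]
  obtain ⟨a0, ha0, ha0p⟩ := hpK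
  refine ⟨a0, ha0, ?_⟩
  have hdist := aux_sphDist_gnoInv hu (hKo ha0) (hLo hb) ha0p rfl hup hux
  calc sphDist a0 b ≤ π * ‖p - x‖ := hdist
    _ ≤ π * ((1+R'^2) * r) := by
        have := Real.pi_pos
        rw [norm_sub_rev]
        gcongr

end Geo3
/-- The metrics `γ_u` and the spherical Hausdorff distance `δ_s` induce
the same topology on `K_u^p(S^n)`: around every proper convex body, metric balls of one
metric contain metric balls of the other. -/
theorem stmt6 {n : ℕ} (hn : 2 ≤ n) (u : Esp n) (hu : ‖u‖ = 1) :
    ∀ K ∈ properBodies u, ∀ ε : ℝ, 0 < ε →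
      (∃ r > 0, ∀ L ∈ properBodies u, sphHaus K L < r → gammaU u K L < ε) ∧
      (∃ r > 0, ∀ L ∈ properBodies u, gammaU u K L < r → sphHaus K L < ε) := by
  intro K hK ε hε
  obtain ⟨hKne, hKcl, hKo, hKcv⟩ := hK
  have hKP : K ∈ properBodies u := ⟨hKne, hKcl, hKo, hKcv⟩
  have hKcpt : IsCompact K := aux_isCompact hKcl hKo
  obtain ⟨w₀, hw₀K, hw₀min'⟩ := hKcpt.exists_isMinOn hKne
    ((Continuous.inner continuous_const continuous_id).continuousOn :
      ContinuousOn (fun w : Esp n => ⟪u, w⟫) K)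
  have hw₀min : ∀ w ∈ K, ⟪u, w₀⟫ ≤ ⟪u, w⟫ := fun w hw => hw₀min' hw
  set c₀ := ⟪u, w₀⟫ with hc₀def
  have hc₀pos : 0 < c₀ := (hKo hw₀K).2
  have hc₀le1 : c₀ ≤ 1 := by
    have h := real_inner_le_norm u w₀
    rw [hu, (hKo hw₀K).1] at h
    norm_num at h
    rw [hc₀def]
    exact h
  have hEne := aux_equator_nonempty hn hu
  constructor
  · -- direction 1 : Hausdorff-close implies gamma-close
    set κ := c₀/2 with hκdef
    have hκpos : 0 < κ := half_pos hc₀pos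
    have hκ1 : κ ≤ 1 := by rw [hκdef]; linarith
    set M := 2/κ^2 with hMdef
    have hMpos : 0 < M := by positivity
    refine ⟨min κ (ε/M), lt_min hκpos (by positivity), ?_⟩
    intro L hL hdist
    obtain ⟨hLne, hLcl, hLo, hLcv⟩ := hL
    have hsetne : {r | 0 ≤ r ∧ (∀ a ∈ K, ∃ b ∈ L, sphDist a b ≤ r) ∧
        (∀ b ∈ L, ∃ a ∈ K, sphDist a b ≤ r)}.Nonempty := by
      obtain ⟨b0, hb0⟩ := hLne
      obtain ⟨a0, ha0⟩ := hKne
      exact ⟨π, Real.pi_pos.le, fun a _ => ⟨b0, hb0, aux_sphDist_le_pi _ _⟩,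
        fun b _ => ⟨a0, ha0, aux_sphDist_le_pi _ _⟩⟩
    unfold sphHaus at hdist
    obtain ⟨r', ⟨hr'0, hKL, hLK⟩, hr'lt⟩ := exists_lt_of_csInf_lt hsetne hdist
    have hr'κ : r' < κ := lt_of_lt_of_le hr'lt (min_le_left _ _)
    have hKcap : ∀ a ∈ K, κ ≤ ⟪u, a⟫ := by
      intro a ha
      have h := hw₀min a ha
      rw [hκdef]
      linarith [h]
    have hLcap : ∀ b ∈ L, κ ≤ ⟪u, b⟫ := by
      intro b hb
      obtain ⟨a, ha, hab⟩ := hLK b hb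
      have h1 : ‖a - b‖ ≤ r' := le_trans (aux_chord_le_sphDist (hKo ha).1 (hLo hb).1) hab
      have h3 := abs_real_inner_le_norm u (a - b)
      rw [hu, one_mul] at h3
      have h4 := (abs_le.mp h3).2
      rw [inner_sub_right] at h4
      have h5 := hw₀min a ha
      rw [hκdef] at *
      linarith
    have hperv : ∀ v ∈ equator u, |sphSupp u K v - sphSupp u L v| ≤ M * r' := by
      intro v hv
      have h1 := aux_supp_le_of_close hu hKne hKo hLo hκpos hκ1 hKcap hLcap hKL hv
      have h2 := aux_supp_le_of_close hu hLne hLo hKo hκpos hκ1 hLcap hKcap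
        (fun b hb => by
          obtain ⟨a, ha, hab⟩ := hLK b hb
          exact ⟨a, ha, by rwa [aux_sphDist_comm]⟩) hv
      rw [abs_le, hMdef]
      constructor
      · linarith [h2]
      · linarith [h1]
    have hgam : gammaU u K L ≤ M * r' := by
      unfold gammaU
      apply csSup_le (hEne.image _)
      rintro _ ⟨v, hv, rfl⟩
      exact hperv v hv
    have hfin : M * r' < ε := by
      have h6 : r' < ε/M := lt_of_lt_of_le hr'lt (min_le_right _ _)
      calc M * r' < M * (ε/M) := mul_lt_mul_of_pos_left h6 hMpos
        _ = ε := by field_simp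
    linarith
  · -- direction 2 : gamma-close implies Hausdorff-close
    set R := c₀⁻¹ + 1 with hRdef
    have hR0 : 0 ≤ R := by positivity
    have hKR : ∀ w ∈ K, ‖gno u w‖ ≤ R := by
      intro w hw
      have hcw : 0 < ⟪u, w⟫ := (hKo hw).2
      have hcw0 : c₀ ≤ ⟪u, w⟫ := hw₀min w hw
      rw [gno]
      calc ‖(⟪u, w⟫)⁻¹ • w - u‖ ≤ ‖(⟪u, w⟫)⁻¹ • w‖ + ‖u‖ := norm_sub_le _ _
        _ = (⟪u, w⟫)⁻¹ + 1 := by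
            rw [norm_smul, norm_inv, Real.norm_eq_abs, abs_of_pos hcw, (hKo hw).1, mul_one, hu]
        _ ≤ c₀⁻¹ + 1 := by gcongr
    set r₀ := (π/2 - Real.arctan R)/2 with hr₀def
    have harcR := Real.arctan_lt_pi_div_two R
    have hr₀pos : 0 < r₀ := by rw [hr₀def]; linarith
    set R' := Real.tan (Real.arctan R + r₀) with hR'def
    have hmem1 : Real.arctan R + r₀ < π/2 := by rw [hr₀def]; linarith
    have hmem0 : 0 ≤ Real.arctan R + r₀ := by
      have := aux_arctan_nonneg hR0
      linarith
    have hπ := Real.pi_pos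
    have hRR' : R ≤ R' := by
      conv_lhs => rw [← Real.tan_arctan R]
      rw [hR'def]
      apply Real.strictMonoOn_tan.monotoneOn
        ⟨Real.neg_pi_div_two_lt_arctan _, Real.arctan_lt_pi_div_two _⟩
        ⟨by linarith, hmem1⟩ (by linarith)
    have hR'0 : 0 ≤ R' := le_trans hR0 hRR'
    set A := π * (1+R'^2) with hAdef
    have hApos : 0 < A := by positivity
    refine ⟨min r₀ (ε/(2*A)), lt_min hr₀pos (by positivity), ?_⟩
    intro L hL hgam
    obtain ⟨hLne, hLcl, hLo, hLcv⟩ := hL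
    have hLP : L ∈ properBodies u := ⟨hLne, hLcl, hLo, hLcv⟩
    set r := min r₀ (ε/(2*A)) with hrdef
    have hr0 : 0 < r := lt_min hr₀pos (by positivity)
    unfold gammaU at hgam
    have hbddγ : BddAbove ((fun v => |sphSupp u K v - sphSupp u L v|) '' equator u) := by
      refine ⟨π, ?_⟩
      rintro _ ⟨v, hv, rfl⟩
      have h1 := aux_abs_sphSupp_le hu hKne hKo hv.2
      have h2 := aux_abs_sphSupp_le hu hLne hLo hv.2
      have h3 : |sphSupp u K v - sphSupp u L v| ≤ |sphSupp u K v| + |sphSupp u L v| := by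
        rw [sub_eq_add_neg]
        exact (abs_add_le _ _).trans (by rw [abs_neg])
      show |sphSupp u K v - sphSupp u L v| ≤ π
      linarith
    have habs : ∀ v ∈ equator u, |sphSupp u K v - sphSupp u L v| ≤ r := by
      intro v hv
      have h : |sphSupp u K v - sphSupp u L v| ≤
          sSup ((fun v => |sphSupp u K v - sphSupp u L v|) '' equator u) :=
        le_csSup hbddγ ⟨v, hv, rfl⟩
      exact le_of_lt (lt_of_le_of_lt h hgam)
    have hLR' : ∀ w ∈ L, ‖gno u w‖ ≤ R' := by
      intro w hw
      rcases eq_or_ne (gno u w) 0 with h0 | h0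
      · rw [h0, norm_zero]; exact hR'0
      · set xw := gno u w with hxw
        set v := ‖xw‖⁻¹ • xw with hvw
        have hvnorm : ‖v‖ = 1 := norm_smul_inv_norm (𝕜 := ℝ) h0
        have hvuz : ⟪u, v⟫ = 0 := by
          rw [hvw, real_inner_smul_right, hxw, aux_inner_u_gno hu (ne_of_gt (hLo hw).2), mul_zero]
        have hveq : v ∈ equator u := ⟨hvnorm, hvuz⟩
        have hxw0 : (0:ℝ) < ‖xw‖ := norm_pos_iff.mpr h0
        have hvx : ⟪v, xw⟫ = ‖xw‖ := by
          rw [hvw, real_inner_smul_left, real_inner_self_eq_norm_sq]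
          field_simp
        have h1 : Real.arctan ‖xw‖ ≤ sphSupp u L v := by
          rw [aux_sphSupp_eq hu hLo hvuz]
          have h1a : Real.arctan ⟪v, gno u w⟫ ≤
              sSup ((fun w => Real.arctan ⟪v, gno u w⟫) '' L) :=
            le_csSup (aux_bddA v L) ⟨w, hw, rfl⟩
          rwa [← hxw, hvx] at h1a
        have h2 : sphSupp u K v ≤ Real.arctan R := by
          rw [aux_sphSupp_eq hu hKo hvuz]
          apply csSup_le (hKne.image _)
          rintro _ ⟨a, ha, rfl⟩
          show Real.arctan ⟪v, gno u a⟫ ≤ _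
          apply Real.arctan_strictMono.monotone
          have h3 := abs_real_inner_le_norm v (gno u a)
          rw [hvnorm, one_mul] at h3
          exact le_trans (le_trans (le_abs_self _) h3) (hKR a ha)
        have h4 := (abs_le.mp (habs v hveq)).1
        have h5 : Real.arctan ‖xw‖ ≤ Real.arctan R + r := by linarith
        have h6 : Real.arctan ‖xw‖ ≤ Real.arctan R + r₀ := by
          have h7 : r ≤ r₀ := min_le_left _ _
          linarith
        have h7 : ‖xw‖ = Real.tan (Real.arctan ‖xw‖) := (Real.tan_arctan _).symm
        show ‖xw‖ ≤ R'
        rw [h7]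
        show Real.tan (Real.arctan ‖xw‖) ≤ Real.tan (Real.arctan R + r₀)
        apply Real.strictMonoOn_tan.monotoneOn
          ⟨Real.neg_pi_div_two_lt_arctan _, Real.arctan_lt_pi_div_two _⟩
          ⟨by linarith, hmem1⟩ h6
    have hγ1 : ∀ v ∈ equator u, sphSupp u L v - sphSupp u K v ≤ r := by
      intro v hv
      have := (abs_le.mp (habs v hv)).1
      linarith
    have hγ2 : ∀ v ∈ equator u, sphSupp u K v - sphSupp u L v ≤ r := fun v hv =>
      le_trans (le_abs_self _) (habs v hv)
    have hKR' : ∀ w ∈ K, ‖gno u w‖ ≤ R' := fun w hw => le_trans (hKR w hw) hRR'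
    have hcp1 := aux_close_point hu hKP hLP hr0.le hKR' hLR' hγ1
    have hcp2 := aux_close_point hu hLP hKP hr0.le hLR' hKR' hγ2
    set m := π * ((1+R'^2) * r) with hmdef
    have hm0 : 0 ≤ m := by positivity
    have hle : sphHaus K L ≤ m := by
      unfold sphHaus
      apply csInf_le ⟨0, fun ρ hρ => hρ.1⟩
      refine ⟨hm0, ?_, ?_⟩
      · intro a ha
        obtain ⟨b', hb', hd⟩ := hcp2 a ha
        exact ⟨b', hb', by rwa [aux_sphDist_comm]⟩
      · intro b hb
        obtain ⟨a', ha', hd⟩ := hcp1 b hb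
        exact ⟨a', ha', hd⟩
    have hmlt : m < ε := by
      have hrle : r ≤ ε/(2*A) := min_le_right _ _
      have hmA : m = A * r := by rw [hmdef, hAdef]; ring
      rw [hmA]
      calc A * r ≤ A * (ε/(2*A)) := mul_le_mul_of_nonneg_left hrle hApos.le
        _ = ε/2 := by field_simp
        _ < ε := by linarith
    linarith
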